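/- Let (ηₙ) be a sequence of strictly positive reals with ηₙ → 0, and let (zₙ) be a sequence of nonzero complex numbers such that for every n, X_{ηₙ}(zₙ)² + zₙ·e^{−(zₙ²−1)/(4ηₙ)}·X_{ηₙ}(zₙ) − zₙ² = 0. If (zₙ) converges to z̄ ∈ ℂ and Re(z̄²) = 1, then (Re z̄)² = 1 and Im z̄ = 0. -/

import Mathlib

open Filter

set_option maxHeartbeats 1600000
set_option linter.unusedVariables false

/-- `X_η(z) = ((1+z)/2)·e^{−(1−z)/(2η)} − ((1−z)/2)·e^{−(1+z)/(2η)}`. -/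
noncomputable def X (η : ℝ) (z : ℂ) : ℂ :=
  ((1 + z) / 2) * Complex.exp (-(1 - z) / (2 * (η : ℂ))) -
    ((1 - z) / 2) * Complex.exp (-(1 + z) / (2 * (η : ℂ)))

lemma X_neg (η : ℝ) (z : ℂ) : X η (-z) = - X η z := by
  unfold X
  rw [show -(1 - -z) = -(1+z) from by ring, show (1:ℂ) + -z = 1 - z from by ring,
    show -(1 - z) = -(1-z) from rfl, show (1:ℂ) - -z = 1 + z from by ring]
  ring

lemma abs_exp_div (w : ℂ) (r : ℝ) : ‖Complex.exp (w / (r:ℂ))‖ = Real.exp (w.re / r) := by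
  rw [Complex.norm_exp, Complex.div_ofReal_re]

lemma aux_false (η : ℕ → ℝ) (hηpos : ∀ n, 0 < η n)
    (hη0 : Tendsto η atTop (nhds 0))
    (z : ℕ → ℂ)
    (heq : ∀ n, X (η n) (z n) ^ 2 +
      z n * Complex.exp (-((z n) ^ 2 - 1) / (4 * (η n : ℂ))) * X (η n) (z n) -
      (z n) ^ 2 = 0)
    (zbar : ℂ) (hlim : Tendsto z atTop (nhds zbar))
    (hre : (zbar ^ 2).re = 1) (hx : 1 < zbar.re) : False := by
  have hinv : Tendsto (fun n => (η n)⁻¹) atTop atTop :=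
    tendsto_inv_nhdsGT_zero.comp (tendsto_nhdsWithin_of_tendsto_nhds_of_eventually_within _ hη0
      (Eventually.of_forall hηpos))
  have hxre : Tendsto (fun n => (z n).re) atTop (nhds zbar.re) :=
    (Complex.continuous_re.tendsto _).comp hlim
  have hzabs : Tendsto (fun n => ‖z n‖) atTop (nhds (‖zbar‖)) :=
    (continuous_norm.tendsto _).comp hlim
  -- abbreviations
  set Xa : ℕ → ℝ := fun n => ‖X (η n) (z n)‖ with hXa
  set A : ℕ → ℝ := fun n => Real.exp (((z n).re - 1) / (2 * η n)) with hAdef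
  set T2 : ℕ → ℝ := fun n => ‖(1 - z n)/2‖ * Real.exp (-((z n).re + 1) / (2 * η n)) with hT2def
  set Ea : ℕ → ℝ := fun n => ‖Complex.exp (-((z n) ^ 2 - 1) / (4 * (η n : ℂ)))‖ with hEadef
  -- A → ∞
  have hA : Tendsto A atTop atTop := by
    apply Real.tendsto_exp_atTop.comp
    have h1 : Tendsto (fun n => ((z n).re - 1)/2 * (η n)⁻¹) atTop atTop :=
      Tendsto.pos_mul_atTop (by linarith : (0:ℝ) < (zbar.re - 1)/2)
        ((hxre.sub_const 1).div_const 2) hinv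
    refine h1.congr (fun n => ?_)
    field_simp
  -- T2 → 0
  have hT2 : Tendsto T2 atTop (nhds 0) := by
    have h1 : Tendsto (fun n => ((z n).re + 1)/2 * (η n)⁻¹) atTop atTop :=
      Tendsto.pos_mul_atTop (by linarith : (0:ℝ) < (zbar.re + 1)/2)
        ((hxre.add_const 1).div_const 2) hinv
    have h2 : Tendsto (fun n => Real.exp (-((z n).re + 1) / (2 * η n))) atTop (nhds 0) := by
      apply Real.tendsto_exp_atBot.comp
      refine (tendsto_neg_atTop_atBot.comp h1).congr (fun n => ?_)
      simp only [Function.comp_apply]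
      field_simp
    have hc2 : Tendsto (fun n => (1 - z n)/2) atTop (nhds ((1 - zbar)/2)) :=
      (hlim.const_sub 1).div_const 2
    have hc2a : Tendsto (fun n => ‖(1 - z n)/2‖) atTop
        (nhds (‖(1 - zbar)/2‖)) := (continuous_norm.tendsto _).comp hc2
    have := hc2a.mul h2
    rw [mul_zero] at this
    exact this
  -- lower bound on |X|
  have hXlow : ∀ n, ‖(1 + z n)/2‖ * A n - T2 n ≤ Xa n := by
    intro n
    have hne : (2 * η n : ℝ) ≠ 0 := by have := hηpos n; positivity
    have e1 : ‖((1 + z n) / 2) * Complex.exp (-(1 - z n) / (2 * (η n : ℂ)))‖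
        = ‖(1 + z n)/2‖ * A n := by
      rw [norm_mul]
      congr 1
      rw [show (2 * ((η n : ℝ) : ℂ)) = ((2 * η n : ℝ) : ℂ) from by push_cast; ring, abs_exp_div]
      congr 1
      simp
    have e2 : ‖((1 - z n) / 2) * Complex.exp (-(1 + z n) / (2 * (η n : ℂ)))‖ = T2 n := by
      rw [norm_mul]
      congr 1
      rw [show (2 * ((η n : ℝ) : ℂ)) = ((2 * η n : ℝ) : ℂ) from by push_cast; ring, abs_exp_div]
      congr 1
      simp
      ring
    calc ‖(1 + z n)/2‖ * A n - T2 n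
        = ‖((1 + z n) / 2) * Complex.exp (-(1 - z n) / (2 * (η n : ℂ)))‖
          - ‖((1 - z n) / 2) * Complex.exp (-(1 + z n) / (2 * (η n : ℂ)))‖ := by
          rw [e1, e2]
      _ ≤ Xa n := by
          simpa [hXa, X] using
            norm_sub_norm_le (((1 + z n) / 2) * Complex.exp (-(1 - z n) / (2 * (η n : ℂ))))
              (((1 - z n) / 2) * Complex.exp (-(1 + z n) / (2 * (η n : ℂ))))
  -- |X| → ∞
  have hc1a : Tendsto (fun n => ‖(1 + z n)/2‖) atTop
      (nhds (‖(1 + zbar)/2‖)) :=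
    (continuous_norm.tendsto _).comp ((hlim.const_add 1).div_const 2)
  have habs1 : 1 < ‖(1 + zbar)/2‖ := by
    have h1 : (1 + zbar.re)/2 ≤ ‖(1 + zbar)/2‖ := by
      have := Complex.re_le_norm ((1 + zbar)/2)
      have e : ((1 + zbar)/2).re = (1 + zbar.re)/2 := by
        rw [show ((2:ℂ)) = ((2:ℝ):ℂ) from by norm_num, Complex.div_ofReal_re]
        simp
      linarith [e ▸ this]
    linarith
  have hT1top : Tendsto (fun n => ‖(1 + z n)/2‖ * A n) atTop atTop :=
    Tendsto.pos_mul_atTop (by linarith) hc1a hA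
  have hXtop : Tendsto Xa atTop atTop :=
    tendsto_atTop_mono hXlow (by simpa [sub_eq_add_neg] using hT1top.atTop_add hT2.neg)
  -- Ea formula
  have hEa : ∀ n, Ea n = Real.exp ((1 - ((z n).re^2 - (z n).im^2)) / (4 * η n)) := by
    intro n
    show ‖Complex.exp _‖ = _
    rw [show (4 * ((η n : ℝ):ℂ)) = ((4 * η n : ℝ):ℂ) from by push_cast; ring, abs_exp_div]
    congr 1
    simp [pow_two, Complex.mul_re]
  -- eventual bounds
  have hev1 : ∀ᶠ n in atTop, 1 ≤ ‖(1 + z n)/2‖ :=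
    hc1a.eventually (eventually_ge_nhds habs1)
  have hevA : ∀ᶠ n in atTop, 4 ≤ A n := hA.eventually_ge_atTop 4
  have hevT2 : ∀ᶠ n in atTop, T2 n ≤ 1 := hT2.eventually (eventually_le_nhds one_pos)
  have hevX : ∀ᶠ n in atTop, A n / 2 ≤ Xa n ∧ 0 < Xa n := by
    filter_upwards [hev1, hevA, hevT2] with n h1 h2 h3
    have h4 := hXlow n
    have h5 : (0:ℝ) ≤ T2 n := by
      have : (0:ℝ) ≤ ‖(1 - z n)/2‖ * Real.exp (-((z n).re + 1) / (2 * η n)) := by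
        positivity
      exact this
    constructor
    · nlinarith
    · nlinarith
  -- key inequality from the characteristic equation
  have key : ∀ n, Xa n^2 ≤ ‖z n‖^2 + ‖z n‖ * Ea n * Xa n := by
    intro n
    set e := Complex.exp (-((z n) ^ 2 - 1) / (4 * (η n : ℂ))) with he
    have h2 : X (η n) (z n)^2 = z n^2 - z n * e * X (η n) (z n) := by
      linear_combination heq n
    have h3 : ‖z n^2 - z n * e * X (η n) (z n)‖
        ≤ ‖z n^2‖ + ‖z n * e * X (η n) (z n)‖ :=
      norm_sub_le _ _
    rw [← h2, norm_pow, norm_pow, norm_mul, norm_mul] at h3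
    exact h3
  -- divide through
  have hevQ : ∀ᶠ n in atTop,
      1 ≤ (‖z n‖/Xa n)^2 + ‖z n‖ * (Ea n / Xa n) := by
    filter_upwards [hevX] with n hn
    have hXpos := hn.2
    have h1 : 1 ≤ (‖z n‖^2 + ‖z n‖ * Ea n * Xa n)/Xa n^2 :=
      (one_le_div (by positivity)).mpr (key n)
    have h2 : (‖z n‖^2 + ‖z n‖ * Ea n * Xa n)/Xa n^2
        = (‖z n‖/Xa n)^2 + ‖z n‖ * (Ea n / Xa n) := by
      field_simp
    linarith [h2 ▸ h1]
  -- the RHS tends to 0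
  have hre2 : zbar.re^2 - zbar.im^2 = 1 := by
    have := hre
    rw [pow_two, Complex.mul_re] at this
    nlinarith [this]
  have hyim : Tendsto (fun n => (z n).im) atTop (nhds zbar.im) :=
    (Complex.continuous_im.tendsto _).comp hlim
  have hq1 : Tendsto (fun n => ‖z n‖ / Xa n) atTop (nhds 0) :=
    hzabs.div_atTop hXtop
  have hq1sq : Tendsto (fun n => (‖z n‖/Xa n)^2) atTop (nhds 0) := by
    have := hq1.pow 2
    simpa using this
  have hq2 : Tendsto (fun n => Ea n / Xa n) atTop (nhds 0) := by
    have hnum : Tendsto (fun n => (((z n).re + 1)^2 - (z n).im^2 - 4)/4) atTop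
        (nhds (((zbar.re + 1)^2 - zbar.im^2 - 4)/4)) :=
      ((((hxre.add_const 1).pow 2).sub (hyim.pow 2)).sub_const 4).div_const 4
    have hLpos : 0 < ((zbar.re + 1)^2 - zbar.im^2 - 4)/4 := by nlinarith
    have hctop : Tendsto (fun n => ((((z n).re + 1)^2 - (z n).im^2 - 4)/4) * (η n)⁻¹)
        atTop atTop := Tendsto.pos_mul_atTop hLpos hnum hinv
    have hg0 : Tendsto (fun n =>
        2 * Real.exp (-(((((z n).re + 1)^2 - (z n).im^2 - 4)/4) * (η n)⁻¹))) atTop (nhds 0) := by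
      have := (Real.tendsto_exp_atBot.comp (tendsto_neg_atTop_atBot.comp hctop)).const_mul 2
      simpa using this
    apply squeeze_zero' ?_ ?_ hg0
    · filter_upwards [hevX] with n hn
      positivity
    · filter_upwards [hevX, hev1, hevA] with n hn h1 h2
      have hXpos := hn.2
      have hApos : (0:ℝ) < A n := by linarith
      have hEnn : (0:ℝ) ≤ Ea n := norm_nonneg _
      have step1 : Ea n / Xa n ≤ Ea n / (A n / 2) :=
        div_le_div_of_nonneg_left hEnn (by linarith) hn.1
      have step2 : Ea n / (A n / 2) = 2 * (Ea n / A n) := by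
        field_simp
      have hηn := hηpos n
      have step3 : Ea n / A n
          = Real.exp (-(((((z n).re + 1)^2 - (z n).im^2 - 4)/4) * (η n)⁻¹)) := by
        rw [hEa n, hAdef, ← Real.exp_sub]
        congr 1
        field_simp
        ring
      calc Ea n / Xa n ≤ Ea n / (A n / 2) := step1
        _ = 2 * (Ea n / A n) := step2
        _ = 2 * Real.exp (-(((((z n).re + 1)^2 - (z n).im^2 - 4)/4) * (η n)⁻¹)) := by
            rw [step3]
  have hq2' : Tendsto (fun n => ‖z n‖ * (Ea n / Xa n)) atTop (nhds 0) := by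
    have := hzabs.mul hq2
    simpa using this
  have hQ : Tendsto (fun n => (‖z n‖/Xa n)^2
      + ‖z n‖ * (Ea n / Xa n)) atTop (nhds 0) := by
    have := hq1sq.add hq2'
    simpa using this
  have hlt := hQ.eventually (eventually_lt_nhds one_pos)
  obtain ⟨n, h1, h2⟩ := (hlt.and hevQ).exists
  linarith

theorem stmt_3 (η : ℕ → ℝ) (hηpos : ∀ n, 0 < η n)
    (hη0 : Tendsto η atTop (nhds 0))
    (z : ℕ → ℂ) (hz : ∀ n, z n ≠ 0)
    (heq : ∀ n, X (η n) (z n) ^ 2 +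
      z n * Complex.exp (-((z n) ^ 2 - 1) / (4 * (η n : ℂ))) * X (η n) (z n) -
      (z n) ^ 2 = 0)
    (zbar : ℂ) (hlim : Tendsto z atTop (nhds zbar))
    (hre : (zbar ^ 2).re = 1) :
    zbar.re ^ 2 = 1 ∧ zbar.im = 0 := by

  have hre2 : zbar.re^2 - zbar.im^2 = 1 := by
    have h := hre
    rw [pow_two, Complex.mul_re] at h
    linear_combination h
  have him : zbar.im = 0 := by
    by_contra him
    have hy2 : 0 < zbar.im^2 := by positivity
    have hx2 : 1 < zbar.re^2 := by nlinarith
    rcases lt_or_ge 1 zbar.re with h | h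
    · exact aux_false η hηpos hη0 z heq zbar hlim hre h
    · have hneg : 1 < (-zbar).re := by
        simp only [Complex.neg_re]
        nlinarith
      refine aux_false η hηpos hη0 (fun n => -(z n)) ?_ (-zbar) hlim.neg ?_ hneg
      · intro n
        rw [X_neg, show ((-(z n))^2 : ℂ) = (z n)^2 from by ring]
        linear_combination heq n
      · rw [show ((-zbar)^2 : ℂ) = zbar^2 from by ring]
        exact hre
  refine ⟨?_, him⟩
  rw [him] at hre2
  simpa using hre2
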